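/- Let a(x) be a monic polynomial of degree m+1, let x1, ..., xm be distinct points, and for 1 ≤ j ≤ m+1 define the family of m polynomials P^{(j)} = {1, x, ..., x^{j−2}, a(x), x·a(x), ..., x^{m−j}·a(x)}. Then for 2 ≤ j < (m−1)/2, the determinant det[P^{(j)}_i(x_k)]_{k,i=1}^m equals ± (∏_{i=1}^{j−1} ∏_{k=i+1}^{m} (x_i − x_k)) · det[R_i(x_k)]_{k=j..m, i}, where R is the family of m−j+1 polynomials {ã^{(j−1)}(x), ..., ã^{(1)}(x), a(x), x·a(x), ..., x^{m−2j+1}·a(x)} and ã^{(ℓ)} denotes the ℓ-fold iterated divided difference of a at x1, ..., xℓ. -/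

import Mathlib

open Polynomial

/-- The divided difference (f(x) − f(x0))/(x − x0) of a polynomial f at a point x0. -/
noncomputable def divDiff (x0 : ℝ) (f : Polynomial ℝ) : Polynomial ℝ :=
  (f - C (f.eval x0)) /ₘ (X - C x0)

/-- The ℓ-fold iterated divided difference of a at x 0, x 1, ..., x (ℓ-1). -/
noncomputable def iterDD (x : ℕ → ℝ) (a : Polynomial ℝ) : ℕ → Polynomial ℝ
  | 0 => a
  | k + 1 => divDiff (x k) (iterDD x a k)

lemma divDiff_key (t : ℝ) (f : Polynomial ℝ) :
    (X - C t) * divDiff t f = f - C (f.eval t) := by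
  rw [divDiff, mul_divByMonic_eq_iff_isRoot]
  simp [IsRoot]

lemma iterDD_step (x : ℕ → ℝ) (a : Polynomial ℝ) (ℓ : ℕ) :
    iterDD x a ℓ = C ((iterDD x a ℓ).eval (x ℓ)) + (X - C (x ℓ)) * iterDD x a (ℓ + 1) := by
  have h := divDiff_key (x ℓ) (iterDD x a ℓ)
  rw [show iterDD x a (ℓ + 1) = divDiff (x ℓ) (iterDD x a ℓ) from rfl, h]
  ring

lemma interp (x : ℕ → ℝ) (a : Polynomial ℝ) (ℓ : ℕ) :
    ∃ qp : Polynomial ℝ, qp.degree < (ℓ : WithBot ℕ) ∧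
      a = qp + (∏ t ∈ Finset.range ℓ, (X - C (x t))) * iterDD x a ℓ := by
  induction ℓ with
  | zero =>
    refine ⟨0, ?_, by simp [iterDD]⟩
    simpa using WithBot.bot_lt_coe 0
  | succ ℓ ih =>
    obtain ⟨qp, hqd, hqa⟩ := ih
    refine ⟨qp + (∏ t ∈ Finset.range ℓ, (X - C (x t))) * C ((iterDD x a ℓ).eval (x ℓ)), ?_, ?_⟩
    · apply lt_of_le_of_lt (degree_add_le _ _)
      rw [max_lt_iff]
      constructor
      · exact lt_trans hqd (by exact_mod_cast Nat.lt_succ_self ℓ)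
      · apply lt_of_le_of_lt (degree_mul_le _ _)
        have h1 : (∏ t ∈ Finset.range ℓ, (X - C (x t))).natDegree = ℓ := by
          rw [natDegree_prod_of_monic _ _ (fun t _ => monic_X_sub_C _)]
          simp
        have h2 : (∏ t ∈ Finset.range ℓ, (X - C (x t))).degree ≤ (ℓ : WithBot ℕ) := by
          exact_mod_cast h1 ▸ degree_le_natDegree (p := ∏ t ∈ Finset.range ℓ, (X - C (x t)))
        calc (∏ t ∈ Finset.range ℓ, (X - C (x t))).degree
              + (C ((iterDD x a ℓ).eval (x ℓ))).degree
            ≤ (ℓ : WithBot ℕ) + 0 := add_le_add h2 degree_C_le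
          _ < ((ℓ + 1 : ℕ) : WithBot ℕ) := by
              rw [add_zero]
              exact_mod_cast Nat.lt_succ_self ℓ
    · rw [Finset.prod_range_succ]
      linear_combination hqa + (∏ t ∈ Finset.range ℓ, (X - C (x t))) * iterDD_step x a ℓ

lemma evalsum (f : Polynomial ℝ) {n : ℕ} (h : f.natDegree < n) (t : ℝ) :
    ∑ i : Fin n, t ^ (i : ℕ) * f.coeff (i : ℕ) = f.eval t := by
  rw [Polynomial.eval_eq_sum_range' h, Fin.sum_univ_eq_sum_range (fun i => t ^ i * f.coeff i) n]
  exact Finset.sum_congr rfl fun i _ => mul_comm _ _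


lemma aux (p q : ℕ) (hp : 1 ≤ p) (hpq : p < q) (a : Polynomial ℝ) (x : ℕ → ℝ) :
    Matrix.det
      (Matrix.fromBlocks
        (Matrix.of fun (k : Fin p) (i : Fin p) => (x (k : ℕ)) ^ (i : ℕ))
        (Matrix.of fun (k : Fin p) (c : Fin q) => (x (k : ℕ)) ^ (c : ℕ) * a.eval (x (k : ℕ)))
        (Matrix.of fun (k : Fin q) (i : Fin p) => (x (p + (k : ℕ))) ^ (i : ℕ))
        (Matrix.of fun (k : Fin q) (c : Fin q) =>
          (x (p + (k : ℕ))) ^ (c : ℕ) * a.eval (x (p + (k : ℕ))))) =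
    (∏ k : Fin p, ∏ t ∈ Finset.range (k : ℕ), (x (k : ℕ) - x t)) *
      ((∏ k : Fin q, ∏ i ∈ Finset.range p, (x (p + (k : ℕ)) - x i)) *
        Matrix.det (Matrix.of fun (k : Fin q) (c : Fin q) =>
          (if (c : ℕ) < p then iterDD x a (p - (c : ℕ)) else X ^ ((c : ℕ) - p) * a).eval
            (x (p + (k : ℕ))))) := by
  classical
  choose qp hqd hqa using fun ℓ => interp x a ℓ
  set Am : Matrix (Fin p) (Fin p) ℝ :=
    Matrix.of fun (k : Fin p) (i : Fin p) => (x (k : ℕ)) ^ (i : ℕ) with hAm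
  set Bm : Matrix (Fin p) (Fin q) ℝ :=
    Matrix.of fun (k : Fin p) (c : Fin q) => (x (k : ℕ)) ^ (c : ℕ) * a.eval (x (k : ℕ)) with hBm
  set Cm : Matrix (Fin q) (Fin p) ℝ :=
    Matrix.of fun (k : Fin q) (i : Fin p) => (x (p + (k : ℕ))) ^ (i : ℕ) with hCm
  set Dm : Matrix (Fin q) (Fin q) ℝ :=
    Matrix.of fun (k : Fin q) (c : Fin q) =>
      (x (p + (k : ℕ))) ^ (c : ℕ) * a.eval (x (p + (k : ℕ))) with hDm
  set W : Polynomial ℝ := ∏ t ∈ Finset.range p, (X - C (x t)) with hW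
  set R : Fin q → Polynomial ℝ :=
    fun c => if (c : ℕ) < p then iterDD x a (p - (c : ℕ)) else X ^ ((c : ℕ) - p) * a with hR
  set S : Fin q → Polynomial ℝ :=
    fun c => if (c : ℕ) < p then ∏ t ∈ Finset.Ico (p - (c : ℕ)) p, (X - C (x t))
             else X ^ ((c : ℕ) - p) * W with hS
  set F : Fin q → Polynomial ℝ :=
    fun c => if (c : ℕ) < p then
        (∏ t ∈ Finset.Ico (p - (c : ℕ)) p, (X - C (x t))) * qp (p - (c : ℕ))
      else 0 with hF
  set Nc : Fin p → Polynomial ℝ := fun c => ∏ t ∈ Finset.range (c : ℕ), (X - C (x t)) with hNc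
  have hWMon : W.Monic := monic_prod_of_monic _ _ fun t _ => monic_X_sub_C _
  have hWdeg : W.natDegree = p := by
    rw [hW, natDegree_prod_of_monic _ _ (fun t _ => monic_X_sub_C _)]
    simp
  have hNcMon : ∀ c : Fin p, (Nc c).Monic :=
    fun c => monic_prod_of_monic _ _ fun t _ => monic_X_sub_C _
  have hNcDeg : ∀ c : Fin p, (Nc c).natDegree = (c : ℕ) := by
    intro c
    rw [hNc, natDegree_prod_of_monic _ _ (fun t _ => monic_X_sub_C _)]
    simp
  have hSMon : ∀ c : Fin q, (S c).Monic := by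
    intro c
    rw [hS]
    by_cases h : (c : ℕ) < p <;> simp only [h, if_true, if_false]
    · exact monic_prod_of_monic _ _ fun t _ => monic_X_sub_C _
    · exact (monic_X_pow _).mul hWMon
  have hSDeg : ∀ c : Fin q, (S c).natDegree = (c : ℕ) := by
    intro c
    rw [hS]
    by_cases h : (c : ℕ) < p <;> simp only [h, if_true, if_false]
    · rw [natDegree_prod_of_monic _ _ (fun t _ => monic_X_sub_C _)]
      simp only [natDegree_X_sub_C, Finset.sum_const, Nat.card_Ico, smul_eq_mul, mul_one]
      omega
    · rw [(monic_X_pow _).natDegree_mul hWMon, natDegree_X_pow, hWdeg]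
      omega
  have hFDeg : ∀ c : Fin q, (F c).natDegree < p := by
    intro c
    rw [hF]
    by_cases h : (c : ℕ) < p <;> simp only [h, if_true, if_false]
    · by_cases hz : qp (p - (c : ℕ)) = 0
      · simp [hz]; omega
      · have h1 : (∏ t ∈ Finset.Ico (p - (c : ℕ)) p, (X - C (x t))).natDegree = (c : ℕ) := by
          rw [natDegree_prod_of_monic _ _ (fun t _ => monic_X_sub_C _)]
          simp only [natDegree_X_sub_C, Finset.sum_const, Nat.card_Ico, smul_eq_mul, mul_one]
          omega
        have h2 : (qp (p - (c : ℕ))).natDegree < p - (c : ℕ) :=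
          (natDegree_lt_iff_degree_lt hz).2 (hqd _)
        have := natDegree_mul_le (p := ∏ t ∈ Finset.Ico (p - (c : ℕ)) p, (X - C (x t)))
          (q := qp (p - (c : ℕ)))
        omega
    · simp; omega
  have hkey : ∀ c : Fin q, S c * a - F c = W * R c := by
    intro c
    rw [hS, hF, hR]
    by_cases h : (c : ℕ) < p <;> simp only [h, if_true, if_false]
    · have hle : p - (c : ℕ) ≤ p := Nat.sub_le _ _
      have hWsplit : (∏ t ∈ Finset.range (p - (c : ℕ)), (X - C (x t))) *
          (∏ t ∈ Finset.Ico (p - (c : ℕ)) p, (X - C (x t))) = W := by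
        rw [hW]
        exact Finset.prod_range_mul_prod_Ico _ hle
      have h2 := hqa (p - (c : ℕ))
      linear_combination (∏ t ∈ Finset.Ico (p - (c : ℕ)) p, (X - C (x t))) * h2
        + iterDD x a (p - (c : ℕ)) * hWsplit
    · ring
  have hWeval : ∀ k : Fin p, W.eval (x (k : ℕ)) = 0 := by
    intro k
    rw [hW, eval_prod]
    exact Finset.prod_eq_zero (Finset.mem_range.2 k.isLt) (by simp)
  set T₁ : Matrix (Fin p) (Fin p) ℝ := Matrix.of fun i c => (Nc c).coeff (i : ℕ) with hT₁
  set T₂ : Matrix (Fin p) (Fin q) ℝ := Matrix.of fun i c => -((F c).coeff (i : ℕ)) with hT₂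
  set T₄ : Matrix (Fin q) (Fin q) ℝ := Matrix.of fun e c => (S c).coeff (e : ℕ) with hT₄
  set A' : Matrix (Fin p) (Fin p) ℝ :=
    Matrix.of fun k c => (Nc c).eval (x (k : ℕ)) with hA'
  set C' : Matrix (Fin q) (Fin p) ℝ :=
    Matrix.of fun k c => (Nc c).eval (x (p + (k : ℕ))) with hC'
  set Nmat : Matrix (Fin q) (Fin q) ℝ :=
    Matrix.of fun k c => (R c).eval (x (p + (k : ℕ))) with hNmat
  set D'' : Matrix (Fin q) (Fin q) ℝ :=
    Matrix.of fun k c => W.eval (x (p + (k : ℕ))) * Nmat k c with hD''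
  have hmaster : ∀ (c : Fin q) (t : ℝ),
      (∑ i : Fin p, t ^ (i : ℕ) * (-((F c).coeff (i : ℕ)))) +
        ∑ e : Fin q, (t ^ (e : ℕ) * a.eval t) * (S c).coeff (e : ℕ) =
      W.eval t * (R c).eval t := by
    intro c t
    have h1 : (∑ i : Fin p, t ^ (i : ℕ) * (-((F c).coeff (i : ℕ)))) = -((F c).eval t) := by
      rw [← evalsum (F c) (hFDeg c) t, ← Finset.sum_neg_distrib]
      exact Finset.sum_congr rfl fun i _ => by ring
    have h2 : (∑ e : Fin q, (t ^ (e : ℕ) * a.eval t) * (S c).coeff (e : ℕ))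
        = a.eval t * (S c).eval t := by
      rw [← evalsum (S c) (by rw [hSDeg c]; exact c.isLt) t, Finset.mul_sum]
      exact Finset.sum_congr rfl fun i _ => by ring
    rw [h1, h2]
    have h3 := congrArg (Polynomial.eval t) (hkey c)
    simp only [eval_mul, eval_sub] at h3
    linarith
  have e11 : Am * T₁ + Bm * (0 : Matrix (Fin q) (Fin p) ℝ) = A' := by
    ext k c
    simp only [Matrix.add_apply, Matrix.mul_apply, Matrix.of_apply, Matrix.mul_zero,
      Matrix.zero_apply, add_zero, hA', hAm, hT₁]
    exact evalsum (Nc c) (by rw [hNcDeg c]; exact c.isLt) (x (k : ℕ))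
  have e21 : Cm * T₁ + Dm * (0 : Matrix (Fin q) (Fin p) ℝ) = C' := by
    ext k c
    simp only [Matrix.add_apply, Matrix.mul_apply, Matrix.of_apply, Matrix.mul_zero,
      Matrix.zero_apply, add_zero, hC', hCm, hT₁]
    exact evalsum (Nc c) (by rw [hNcDeg c]; exact c.isLt) (x (p + (k : ℕ)))
  have e12 : Am * T₂ + Bm * T₄ = 0 := by
    ext k c
    simp only [Matrix.add_apply, Matrix.mul_apply, Matrix.of_apply, Matrix.zero_apply,
      hAm, hBm, hT₂, hT₄]
    rw [hmaster c (x (k : ℕ)), hWeval k, zero_mul]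
  have e22 : Cm * T₂ + Dm * T₄ = D'' := by
    ext k c
    simp only [Matrix.add_apply, Matrix.mul_apply, Matrix.of_apply, hCm, hDm, hT₂, hT₄,
      hD'', hNmat]
    rw [hmaster c (x (p + (k : ℕ)))]
  have hmul : Matrix.fromBlocks Am Bm Cm Dm * Matrix.fromBlocks T₁ T₂ 0 T₄ =
      Matrix.fromBlocks A' 0 C' D'' := by
    rw [Matrix.fromBlocks_multiply, e11, e21, e12, e22]
  have htriT₁ : T₁.BlockTriangular id := by
    intro i c h
    have hlt : (Nc c).natDegree < (i : ℕ) := by rw [hNcDeg c]; exact h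
    simp only [hT₁, Matrix.of_apply]
    exact coeff_eq_zero_of_natDegree_lt hlt
  have htriT₄ : T₄.BlockTriangular id := by
    intro i c h
    have hlt : (S c).natDegree < (i : ℕ) := by rw [hSDeg c]; exact h
    simp only [hT₄, Matrix.of_apply]
    exact coeff_eq_zero_of_natDegree_lt hlt
  have hdetT : (Matrix.fromBlocks T₁ T₂ 0 T₄).det = 1 := by
    rw [Matrix.det_fromBlocks_zero₂₁, Matrix.det_of_upperTriangular htriT₁,
      Matrix.det_of_upperTriangular htriT₄]
    rw [Finset.prod_eq_one ?_, Finset.prod_eq_one ?_, mul_one]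
    · intro i _
      have h1 := (hSMon i).coeff_natDegree
      rw [hSDeg i] at h1
      simpa only [hT₄, Matrix.of_apply] using h1
    · intro i _
      have h1 := (hNcMon i).coeff_natDegree
      rw [hNcDeg i] at h1
      simpa only [hT₁, Matrix.of_apply] using h1
  have htriA' : A'.BlockTriangular OrderDual.toDual := by
    intro i c h
    have hic : (i : ℕ) < (c : ℕ) := OrderDual.toDual_lt_toDual.mp h
    simp only [hA', Matrix.of_apply, hNc, eval_prod]
    exact Finset.prod_eq_zero (Finset.mem_range.2 hic) (by simp)
  have hdetA' : A'.det = ∏ k : Fin p, ∏ t ∈ Finset.range (k : ℕ), (x (k : ℕ) - x t) := by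
    rw [Matrix.det_of_lowerTriangular A' htriA']
    exact Finset.prod_congr rfl fun k _ => by simp [hA', hNc, eval_prod]
  have hdetD'' : D''.det = (∏ k : Fin q, W.eval (x (p + (k : ℕ)))) * Nmat.det := by
    rw [hD'']
    exact Matrix.det_mul_column _ _
  have hWevals : (∏ k : Fin q, W.eval (x (p + (k : ℕ)))) =
      ∏ k : Fin q, ∏ i ∈ Finset.range p, (x (p + (k : ℕ)) - x i) :=
    Finset.prod_congr rfl fun k _ => by simp [hW, eval_prod]
  calc (Matrix.fromBlocks Am Bm Cm Dm).det
      = (Matrix.fromBlocks Am Bm Cm Dm).det * (Matrix.fromBlocks T₁ T₂ 0 T₄).det := by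
        rw [hdetT, mul_one]
    _ = (Matrix.fromBlocks Am Bm Cm Dm * Matrix.fromBlocks T₁ T₂ 0 T₄).det :=
        (Matrix.det_mul _ _).symm
    _ = (Matrix.fromBlocks A' 0 C' D'').det := by rw [hmul]
    _ = A'.det * D''.det := Matrix.det_fromBlocks_zero₁₂ _ _ _
    _ = _ := by rw [hdetA', hdetD'', hWevals]

/-- for a monic of degree m+1, distinct points x1, ..., xm (0-indexed here as
x 0, ..., x (m-1)) and 2 ≤ j < (m−1)/2, the Vandermonde determinant of the family
P^{(j)} = {1, x, ..., x^{j−2}, a, x·a, ..., x^{m−j}·a} at x1, ..., xm equals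
± (∏_{i=1}^{j−1} ∏_{k=i+1}^{m} (x_i − x_k)) times the Vandermonde determinant of
R = {ã^{(j−1)}, ..., ã^{(1)}, a, x·a, ..., x^{m−2j+1}·a} at x_j, ..., x_m. -/
theorem stmt9 (m j : ℕ) (hj2 : 2 ≤ j) (hjm : 2 * j < m - 1)
    (a : Polynomial ℝ) (ha : a.Monic) (hdeg : a.natDegree = m + 1)
    (x : ℕ → ℝ) (hx : ∀ i < m, ∀ k < m, x i = x k → i = k) :
    ∃ ε : ℝ, (ε = 1 ∨ ε = -1) ∧
      Matrix.det (Matrix.of fun k i : Fin m =>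
          (if (i : ℕ) < j - 1 then X ^ (i : ℕ) else X ^ ((i : ℕ) - (j - 1)) * a).eval (x k)) =
      ε * (∏ i ∈ Finset.range (j - 1), ∏ k ∈ Finset.Ico (i + 1) m, (x i - x k)) *
        Matrix.det (Matrix.of fun k i : Fin (m - j + 1) =>
          (if (i : ℕ) < j - 1 then iterDD x a (j - 1 - (i : ℕ))
           else X ^ ((i : ℕ) - (j - 1)) * a).eval (x (j - 1 + (k : ℕ)))) := by
  classical
  set p := j - 1 with hp
  set q := m - j + 1 with hq
  have hp1 : 1 ≤ p := by omega
  have hpq : p < q := by omega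
  have hm : p + q = m := by omega
  set n := (∑ k ∈ Finset.range p, k) + p * q with hn
  refine ⟨(-1 : ℝ) ^ n, ?_, ?_⟩
  · rcases Nat.even_or_odd n with h | h
    · exact Or.inl h.neg_one_pow
    · exact Or.inr h.neg_one_pow
  set e : Fin p ⊕ Fin q ≃ Fin m := finSumFinEquiv.trans (finCongr hm) with he
  have hel : ∀ i : Fin p, ((e (Sum.inl i)) : ℕ) = (i : ℕ) := by
    intro i; simp [he]
  have her : ∀ k : Fin q, ((e (Sum.inr k)) : ℕ) = p + (k : ℕ) := by
    intro k; simp [he]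
  set M : Matrix (Fin m) (Fin m) ℝ := Matrix.of fun k i : Fin m =>
      (if (i : ℕ) < p then X ^ (i : ℕ) else X ^ ((i : ℕ) - p) * a).eval (x k) with hM
  have hsub : M.submatrix e e = Matrix.fromBlocks
      (Matrix.of fun (k : Fin p) (i : Fin p) => (x (k : ℕ)) ^ (i : ℕ))
      (Matrix.of fun (k : Fin p) (c : Fin q) => (x (k : ℕ)) ^ (c : ℕ) * a.eval (x (k : ℕ)))
      (Matrix.of fun (k : Fin q) (i : Fin p) => (x (p + (k : ℕ))) ^ (i : ℕ))
      (Matrix.of fun (k : Fin q) (c : Fin q) =>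
        (x (p + (k : ℕ))) ^ (c : ℕ) * a.eval (x (p + (k : ℕ)))) := by
    ext k c
    cases k with
    | inl k =>
      cases c with
      | inl c =>
        simp only [Matrix.submatrix_apply, hM, Matrix.of_apply, hel, Matrix.fromBlocks_apply₁₁]
        rw [if_pos c.isLt]
        simp
      | inr c =>
        simp only [Matrix.submatrix_apply, hM, Matrix.of_apply, hel, her,
          Matrix.fromBlocks_apply₁₂]
        rw [if_neg (by omega)]
        have : p + (c : ℕ) - p = (c : ℕ) := by omega
        rw [this]
        simp
    | inr k =>
      cases c with
      | inl c =>
        simp only [Matrix.submatrix_apply, hM, Matrix.of_apply, hel, her,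
          Matrix.fromBlocks_apply₂₁]
        rw [if_pos c.isLt]
        simp
      | inr c =>
        simp only [Matrix.submatrix_apply, hM, Matrix.of_apply, her,
          Matrix.fromBlocks_apply₂₂]
        rw [if_neg (by omega)]
        have : p + (c : ℕ) - p = (c : ℕ) := by omega
        rw [this]
        simp
  have hdetM : M.det =
      (∏ k : Fin p, ∏ t ∈ Finset.range (k : ℕ), (x (k : ℕ) - x t)) *
      ((∏ k : Fin q, ∏ i ∈ Finset.range p, (x (p + (k : ℕ)) - x i)) *
        Matrix.det (Matrix.of fun (k : Fin q) (c : Fin q) =>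
          (if (c : ℕ) < p then iterDD x a (p - (c : ℕ)) else X ^ ((c : ℕ) - p) * a).eval
            (x (p + (k : ℕ))))) := by
    rw [← Matrix.det_submatrix_equiv_self e M, hsub]
    exact aux p q hp1 hpq a x
  -- sign bookkeeping
  have hdA : (∏ k : Fin p, ∏ t ∈ Finset.range (k : ℕ), (x (k : ℕ) - x t)) =
      ((-1 : ℝ) ^ (∑ k ∈ Finset.range p, k)) *
        ∏ i ∈ Finset.range p, ∏ k ∈ Finset.Ico (i + 1) p, (x i - x k) := by
    rw [Fin.prod_univ_eq_prod_range (fun k => ∏ t ∈ Finset.range k, (x k - x t)) p]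
    have h1 : ∀ k, (∏ t ∈ Finset.range k, (x k - x t)) =
        (-1 : ℝ) ^ k * ∏ t ∈ Finset.range k, (x t - x k) := by
      intro k
      have hc : ((-1 : ℝ)) ^ k = ∏ t ∈ Finset.range k, (-1 : ℝ) := by simp
      rw [hc, ← Finset.prod_mul_distrib]
      exact Finset.prod_congr rfl fun t _ => by ring
    rw [Finset.prod_congr rfl fun k _ => h1 k, Finset.prod_mul_distrib,
      Finset.prod_pow_eq_pow_sum]
    congr 1
    exact Finset.prod_comm' (fun k t => by
      simp only [Finset.mem_range, Finset.mem_Ico]; omega)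
  have hdW : (∏ k : Fin q, ∏ i ∈ Finset.range p, (x (p + (k : ℕ)) - x i)) =
      ((-1 : ℝ) ^ (p * q)) *
        ∏ i ∈ Finset.range p, ∏ k ∈ Finset.Ico p m, (x i - x k) := by
    rw [Fin.prod_univ_eq_prod_range (fun k => ∏ i ∈ Finset.range p, (x (p + k) - x i)) q]
    have h1 : ∀ k, (∏ i ∈ Finset.range p, (x (p + k) - x i)) =
        (-1 : ℝ) ^ p * ∏ i ∈ Finset.range p, (x i - x (p + k)) := by
      intro k
      have hc : ((-1 : ℝ)) ^ p = ∏ t ∈ Finset.range p, (-1 : ℝ) := by simp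
      rw [hc, ← Finset.prod_mul_distrib]
      exact Finset.prod_congr rfl fun t _ => by ring
    rw [Finset.prod_congr rfl fun k _ => h1 k, Finset.prod_mul_distrib, Finset.prod_const,
      Finset.card_range, ← pow_mul]
    congr 1
    rw [Finset.prod_comm]
    refine Finset.prod_congr rfl fun i _ => ?_
    rw [Finset.prod_Ico_eq_prod_range]
    have : m - p = q := by omega
    rw [this]
  have hpre : (∏ i ∈ Finset.range p, ∏ k ∈ Finset.Ico (i + 1) m, (x i - x k)) =
      (∏ i ∈ Finset.range p, ∏ k ∈ Finset.Ico (i + 1) p, (x i - x k)) *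
        ∏ i ∈ Finset.range p, ∏ k ∈ Finset.Ico p m, (x i - x k) := by
    rw [← Finset.prod_mul_distrib]
    refine Finset.prod_congr rfl fun i hi => ?_
    rw [Finset.prod_Ico_consecutive]
    · exact (by simp at hi; omega : i + 1 ≤ p)
    · omega
  rw [hdetM, hdA, hdW, hpre, hn]
  ring
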